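/- Fix complex numbers w, z such that wI − X and zI − Z are invertible, and let c ∈ ℂ and R > 0 be such that xI − X − Z is invertible for every x on the circle |x − c| = R. Then the circle integral ∮_{|x−c|=R} exp(x(w+z) − (w²+z²)/2 − x²/2) · (1 + aᵀ(wI−X)⁻¹(xI−X−Z)⁻¹b) · (1 + aᵀ(xI−X−Z)⁻¹(zI−Z)⁻¹b) dx equals 0. In other words, the product ψ_{𝒳^♭}(x,−1/2,w)·ψ_𝒳(x,−1/2,z)·e^{−x²/2} has zero residue at every pole in x. -/

import Mathlib

open Matrix

attribute [local instance] Matrix.linftyOpNormedRing Matrix.linftyOpNormedAlgebra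

private lemma vecMulVec_mulVec' {N : ℕ} (b a v : Fin N → ℂ) :
    (vecMulVec b a).mulVec v = (a ⬝ᵥ v) • b := by
  funext i
  simp [vecMulVec_apply, mulVec, dotProduct, Finset.mul_sum, Finset.sum_mul, mul_comm,
    mul_assoc, mul_left_comm]

private lemma cross {N : ℕ} (P Q : Matrix (Fin N) (Fin N) ℂ) (a b : Fin N → ℂ) :
    (a ⬝ᵥ P.mulVec b) * (a ⬝ᵥ Q.mulVec b)
      = a ⬝ᵥ (P * vecMulVec b a * Q).mulVec b := by
  rw [← Matrix.mulVec_mulVec, ← Matrix.mulVec_mulVec, vecMulVec_mulVec',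
    Matrix.mulVec_smul, dotProduct_smul]
  simp [smul_eq_mul]; ring

private lemma key_alg {N : ℕ} (W Zm M : Matrix (Fin N) (Fin N) ℂ) (a b : Fin N → ℂ) (s : ℂ)
    (hW : IsUnit W) (hZ : IsUnit Zm) (hM : IsUnit M)
    (hba : vecMulVec b a = M * Zm - Zm * M - 1)
    (hsum : M = W + Zm + s • 1) :
    (1 + a ⬝ᵥ (W⁻¹ * M⁻¹).mulVec b) * (1 + a ⬝ᵥ (M⁻¹ * Zm⁻¹).mulVec b)
      = 1 + a ⬝ᵥ (W⁻¹ * Zm⁻¹).mulVec b - s * (a ⬝ᵥ (W⁻¹ * M⁻¹ * Zm⁻¹).mulVec b)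
        - a ⬝ᵥ (W⁻¹ * M⁻¹ * M⁻¹ * Zm⁻¹).mulVec b := by
  have hdW := (Matrix.isUnit_iff_isUnit_det _).mp hW
  have hdZ := (Matrix.isUnit_iff_isUnit_det _).mp hZ
  have hdM := (Matrix.isUnit_iff_isUnit_det _).mp hM
  have hWi : ∀ t : Matrix (Fin N) (Fin N) ℂ, W⁻¹ * (W * t) = t := fun t => by
    rw [← Matrix.mul_assoc, Matrix.nonsing_inv_mul _ hdW, Matrix.one_mul]
  have hiM : ∀ t : Matrix (Fin N) (Fin N) ℂ, M⁻¹ * (M * t) = t := fun t => by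
    rw [← Matrix.mul_assoc, Matrix.nonsing_inv_mul _ hdM, Matrix.one_mul]
  have hMi : ∀ t : Matrix (Fin N) (Fin N) ℂ, M * (M⁻¹ * t) = t := fun t => by
    rw [← Matrix.mul_assoc, Matrix.mul_nonsing_inv _ hdM, Matrix.one_mul]
  have hZi : Zm * Zm⁻¹ = 1 := Matrix.mul_nonsing_inv _ hdZ
  have hfg : (a ⬝ᵥ (W⁻¹ * M⁻¹).mulVec b) * (a ⬝ᵥ (M⁻¹ * Zm⁻¹).mulVec b)
      = a ⬝ᵥ ((W⁻¹ * (Zm * (M⁻¹ * Zm⁻¹)) - W⁻¹ * M⁻¹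
          - W⁻¹ * (M⁻¹ * (M⁻¹ * Zm⁻¹)))).mulVec b := by
    rw [cross, hba]
    congr 1
    simp only [Matrix.mul_sub, Matrix.sub_mul, Matrix.mul_one, Matrix.one_mul, Matrix.mul_assoc,
      hiM, hMi, hZi, Matrix.mul_one]
  have hres : W⁻¹ * Zm⁻¹ = M⁻¹ * Zm⁻¹ + W⁻¹ * (Zm * (M⁻¹ * Zm⁻¹)) + s • (W⁻¹ * (M⁻¹ * Zm⁻¹)) := by
    have h1 : (1 : Matrix (Fin N) (Fin N) ℂ) = W * M⁻¹ + Zm * M⁻¹ + s • M⁻¹ := by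
      rw [← Matrix.mul_nonsing_inv M hdM]
      nth_rewrite 1 [hsum]
      rw [Matrix.add_mul, Matrix.add_mul, Matrix.smul_mul, Matrix.one_mul]
    calc W⁻¹ * Zm⁻¹ = W⁻¹ * ((W * M⁻¹ + Zm * M⁻¹ + s • M⁻¹) * Zm⁻¹) := by
          rw [← h1, Matrix.one_mul]
      _ = M⁻¹ * Zm⁻¹ + W⁻¹ * (Zm * (M⁻¹ * Zm⁻¹)) + s • (W⁻¹ * (M⁻¹ * Zm⁻¹)) := by
          simp only [Matrix.add_mul, Matrix.mul_add, Matrix.smul_mul, Matrix.mul_smul,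
            Matrix.mul_assoc, hWi]
  have expand : ∀ f g : ℂ, (1 + f) * (1 + g) = 1 + f + g + f * g := by intros; ring
  rw [expand, hfg, hres]
  simp only [Matrix.sub_mulVec, Matrix.add_mulVec, Matrix.smul_mulVec,
    dotProduct_add, dotProduct_sub, dotProduct_smul, smul_eq_mul, Matrix.mul_assoc]
  ring

/-- The scalar observable `A ↦ aᵀ (iW * A * iZ) b` as a continuous linear map. -/
private noncomputable def Lmap {N : ℕ} (iW iZ : Matrix (Fin N) (Fin N) ℂ) (a b : Fin N → ℂ) :
    Matrix (Fin N) (Fin N) ℂ →L[ℂ] ℂ :=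
  LinearMap.toContinuousLinearMap
    { toFun := fun A => a ⬝ᵥ (iW * A * iZ).mulVec b
      map_add' := fun A B => by
        simp [Matrix.mul_add, Matrix.add_mul, Matrix.add_mulVec, dotProduct_add]
      map_smul' := fun c A => by
        simp [Matrix.mul_smul, Matrix.smul_mul, Matrix.smul_mulVec, dotProduct_smul] }

private lemma Lmap_apply {N : ℕ} (iW iZ : Matrix (Fin N) (Fin N) ℂ) (a b : Fin N → ℂ)
    (A : Matrix (Fin N) (Fin N) ℂ) :
    Lmap iW iZ a b A = a ⬝ᵥ (iW * A * iZ).mulVec b := rfl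

private lemma hasDerivAt_inv_affine {N : ℕ} {X Z : Matrix (Fin N) (Fin N) ℂ} {x : ℂ}
    (h : IsUnit (x • (1 : Matrix (Fin N) (Fin N) ℂ) - X - Z)) :
    HasDerivAt (fun y : ℂ => (y • (1 : Matrix (Fin N) (Fin N) ℂ) - X - Z)⁻¹)
      (-((x • (1 : Matrix (Fin N) (Fin N) ℂ) - X - Z)⁻¹ *
         (x • (1 : Matrix (Fin N) (Fin N) ℂ) - X - Z)⁻¹)) x := by
  have haff : HasDerivAt (fun y : ℂ => y • (1 : Matrix (Fin N) (Fin N) ℂ) - X - Z)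
      (1 : Matrix (Fin N) (Fin N) ℂ) x := by
    have := ((hasDerivAt_id x).smul_const (1 : Matrix (Fin N) (Fin N) ℂ))
    convert (this.sub_const X).sub_const Z using 1
    · rfl
    · rfl
    · rfl
    · rfl
    · simp
  have hinv := hasFDerivAt_ringInverse (𝕜 := ℂ) h.unit
  have hcomp := hinv.comp_hasDerivAt x haff
  have heq : (fun y : ℂ => (y • (1 : Matrix (Fin N) (Fin N) ℂ) - X - Z)⁻¹)
      = fun y => Ring.inverse (y • (1 : Matrix (Fin N) (Fin N) ℂ) - X - Z) := by
    funext y; rw [Matrix.nonsing_inv_eq_ringInverse]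
  rw [heq]
  convert hcomp using 1
  · rfl
  · rfl
  · rfl
  · rfl
  simp [ContinuousLinearMap.mulLeftRight_apply, h.unit_spec, ← Matrix.nonsing_inv_eq_ringInverse]

private lemma hasDerivAt_E (w z x : ℂ) :
    HasDerivAt (fun x : ℂ => Complex.exp (x * (w + z) - (w ^ 2 + z ^ 2) / 2 - x ^ 2 / 2))
      ((w + z - x) * Complex.exp (x * (w + z) - (w ^ 2 + z ^ 2) / 2 - x ^ 2 / 2)) x := by
  have hq : HasDerivAt (fun x : ℂ => x * (w + z) - (w ^ 2 + z ^ 2) / 2 - x ^ 2 / 2)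
      (w + z - x) x := by
    have h1 : HasDerivAt (fun x : ℂ => x * (w + z)) (w + z) x := by
      simpa using (hasDerivAt_id x).mul_const (w + z)
    have h2 : HasDerivAt (fun x : ℂ => x ^ 2 / 2) x x := by
      simpa using (hasDerivAt_pow 2 x).div_const 2
    exact (h1.sub_const ((w ^ 2 + z ^ 2) / 2)).sub h2
  simpa [mul_comm] using hq.cexp

/-- The product `ψ_{𝒳^♭}(x,−1/2,w)·ψ_𝒳(x,−1/2,z)·e^{−x²/2}` has vanishing integral over
every circle avoiding the poles; i.e., zero residue at every pole in `x`. -/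
theorem circleIntegral_bispectral_product_eq_zero {N : ℕ} (hN : 0 < N)
    (X Z : Matrix (Fin N) (Fin N) ℂ) (a b : Fin N → ℂ)
    (hrank : X * Z - Z * X - 1 = Matrix.vecMulVec b a)
    (w z : ℂ)
    (hW : IsUnit (w • (1 : Matrix (Fin N) (Fin N) ℂ) - X))
    (hZ : IsUnit (z • (1 : Matrix (Fin N) (Fin N) ℂ) - Z))
    (c : ℂ) (R : ℝ) (hR : 0 < R)
    (hXZ : ∀ x : ℂ, ‖x - c‖ = R →
      IsUnit (x • (1 : Matrix (Fin N) (Fin N) ℂ) - X - Z)) :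
    (∮ x in C(c, R),
      Complex.exp (x * (w + z) - (w ^ 2 + z ^ 2) / 2 - x ^ 2 / 2) *
        (1 + a ⬝ᵥ ((w • (1 : Matrix (Fin N) (Fin N) ℂ) - X)⁻¹
            * (x • 1 - X - Z)⁻¹).mulVec b) *
        (1 + a ⬝ᵥ ((x • (1 : Matrix (Fin N) (Fin N) ℂ) - X - Z)⁻¹
            * (z • 1 - Z)⁻¹).mulVec b)) = 0 := by
  set Wm : Matrix (Fin N) (Fin N) ℂ := w • 1 - X with hWm
  set Zm : Matrix (Fin N) (Fin N) ℂ := z • 1 - Z with hZm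
  set E : ℂ → ℂ := fun x => Complex.exp (x * (w + z) - (w ^ 2 + z ^ 2) / 2 - x ^ 2 / 2) with hE
  set L : Matrix (Fin N) (Fin N) ℂ →L[ℂ] ℂ := Lmap Wm⁻¹ Zm⁻¹ a b with hL
  set Mi : ℂ → Matrix (Fin N) (Fin N) ℂ := fun x => (x • (1 : Matrix (Fin N) (Fin N) ℂ) - X - Z)⁻¹ with hMi
  set F : ℂ → ℂ := fun x => E x * L (Mi x) with hF
  set dF : ℂ → ℂ := fun x => (w + z - x) * E x * L (Mi x) + E x * L (-(Mi x * Mi x)) with hdF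
  set P : ℂ → ℂ := fun x => E x * (1 + a ⬝ᵥ (Wm⁻¹ * Zm⁻¹).mulVec b) with hP
  set f : ℂ → ℂ := fun x =>
      E x * (1 + a ⬝ᵥ (Wm⁻¹ * Mi x).mulVec b) * (1 + a ⬝ᵥ (Mi x * Zm⁻¹).mulVec b) with hf
  -- membership translation
  have hsph : ∀ x ∈ Metric.sphere c R, IsUnit (x • (1 : Matrix (Fin N) (Fin N) ℂ) - X - Z) := by
    intro x hx
    exact hXZ x (by simpa [Complex.dist_eq] using hx)
  -- Step 1: derivative of F on the sphere
  have hder : ∀ x ∈ Metric.sphere c R, HasDerivAt F (dF x) x := by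
    intro x hx
    have hM := hsph x hx
    have h1 : HasDerivAt (fun y : ℂ => L (Mi y)) (L (-(Mi x * Mi x))) x :=
      L.hasFDerivAt.comp_hasDerivAt x (hasDerivAt_inv_affine hM)
    exact (hasDerivAt_E w z x).mul h1
  -- Step 2: the key identity on the sphere
  have hEq : Set.EqOn f (fun x => dF x + P x) (Metric.sphere c R) := by
    intro x hx
    have hM := hsph x hx
    have hba : vecMulVec b a = (x • (1 : Matrix (Fin N) (Fin N) ℂ) - X - Z) * Zm - Zm * (x • (1 : Matrix (Fin N) (Fin N) ℂ) - X - Z) - 1 := by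
      rw [← hrank, hZm]
      simp only [Matrix.sub_mul, Matrix.mul_sub, Matrix.smul_mul, Matrix.mul_smul,
        Matrix.one_mul, Matrix.mul_one, smul_sub, smul_smul]
      module
    have hsum : (x • (1 : Matrix (Fin N) (Fin N) ℂ) - X - Z) = Wm + Zm + (x - w - z) • 1 := by
      rw [hWm, hZm]
      simp only [sub_smul]
      abel
    have hk := key_alg Wm Zm (x • (1 : Matrix (Fin N) (Fin N) ℂ) - X - Z) a b (x - w - z) hW hZ hM hba hsum
    simp only [hf, hdF, hP, hMi, Lmap_apply, hL]
    rw [mul_assoc, hk]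
    simp only [Lmap_apply, Matrix.mul_neg, Matrix.neg_mul, Matrix.neg_mulVec,
      dotProduct_neg, Matrix.mul_assoc]
    ring
  -- continuity facts
  have hEcont : Continuous E := by
    exact Complex.continuous_exp.comp
      (((continuous_id.mul continuous_const).sub continuous_const).sub
        ((continuous_pow 2).div_const 2))
  have hfc : ContinuousOn f (Metric.sphere c R) := by
    have hMic : ContinuousOn Mi (Metric.sphere c R) := fun x hx =>
      ((hasDerivAt_inv_affine (hsph x hx)).continuousAt).continuousWithinAt
    have h1 : ContinuousOn (fun x => a ⬝ᵥ (Wm⁻¹ * Mi x).mulVec b) (Metric.sphere c R) := by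
      have : ∀ x, a ⬝ᵥ (Wm⁻¹ * Mi x).mulVec b = Lmap Wm⁻¹ 1 a b (Mi x) := by
        intro x; rw [Lmap_apply, Matrix.mul_one]
      simp only [this]
      exact (Lmap Wm⁻¹ 1 a b).continuous.comp_continuousOn hMic
    have h2 : ContinuousOn (fun x => a ⬝ᵥ (Mi x * Zm⁻¹).mulVec b) (Metric.sphere c R) := by
      have : ∀ x, a ⬝ᵥ (Mi x * Zm⁻¹).mulVec b = Lmap 1 Zm⁻¹ a b (Mi x) := by
        intro x; rw [Lmap_apply, Matrix.one_mul]
      simp only [this]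
      exact (Lmap 1 Zm⁻¹ a b).continuous.comp_continuousOn hMic
    exact ((hEcont.continuousOn.mul (continuousOn_const.add h1)).mul (continuousOn_const.add h2))
  have hPc : Continuous P := hEcont.mul continuous_const
  have hPint : CircleIntegrable P c R := hPc.continuousOn.circleIntegrable hR.le
  have hfint : CircleIntegrable f c R := hfc.circleIntegrable hR.le
  -- assemble
  have h0 : (∮ x in C(c, R), f x) = (∮ x in C(c, R), (f x - P x)) + (∮ x in C(c, R), P x) := by
    rw [circleIntegral.integral_sub hfint hPint]
    ring
  have hdF0 : (∮ x in C(c, R), (f x - P x)) = 0 := by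
    rw [circleIntegral.integral_congr hR.le (g := dF) (fun x hx => by
      rw [hEq hx]; ring)]
    exact circleIntegral.integral_eq_zero_of_hasDerivWithinAt hR.le
      (fun x hx => (hder x hx).hasDerivWithinAt)
  have hP0 : (∮ x in C(c, R), P x) = 0 := by
    refine Complex.circleIntegral_eq_zero_of_differentiable_on_off_countable hR.le
      Set.countable_empty hPc.continuousOn (fun x _ => ?_)
    exact ((hasDerivAt_E w z x).differentiableAt.mul_const _)
  calc (∮ x in C(c, R),
      Complex.exp (x * (w + z) - (w ^ 2 + z ^ 2) / 2 - x ^ 2 / 2) *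
        (1 + a ⬝ᵥ ((w • (1 : Matrix (Fin N) (Fin N) ℂ) - X)⁻¹
            * (x • 1 - X - Z)⁻¹).mulVec b) *
        (1 + a ⬝ᵥ ((x • (1 : Matrix (Fin N) (Fin N) ℂ) - X - Z)⁻¹
            * (z • 1 - Z)⁻¹).mulVec b)) = ∮ x in C(c, R), f x := rfl
    _ = 0 := by rw [h0, hdF0, hP0, add_zero]
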